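/- Let α > 1/2, ω, a ∈ ℝ, T > 0. Every distributional solution φ ∈ L²[-T,T] of Λ^α φ + ωφ - φ² + a = 0 (in the sense that ⟨φ, Λ^α h⟩ + ω⟨φ,h⟩ - ⟨φ², h⟩ + a⟨1,h⟩ = 0 for all smooth test functions h) belongs to H^k[-T,T] for every k ∈ ℕ. -/

import Mathlib

open MeasureTheory intervalIntegral

/-- The `k`-th Fourier coefficient of a `2T`-periodic function on `[-T,T]`. -/
noncomputable def fourierCoeffT (T : ℝ) (f : ℝ → ℂ) (k : ℤ) : ℂ :=
  (1 / Real.sqrt (2 * T)) *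
    ∫ x in (-T)..T, f x * Complex.exp (-(Complex.I * Real.pi * k * x / T))

namespace APS

/-- Summability of `(1+|j|)^(-ρ)` over `ℤ` for `ρ > 1`. -/
lemma summable_weight {ρ : ℝ} (hρ : 1 < ρ) :
    Summable (fun j : ℤ => (1 + |(j : ℝ)|) ^ (-ρ)) := by
  have hnat : Summable (fun n : ℕ => (1 + |(n : ℝ)|) ^ (-ρ)) := by
    have h1 : Summable (fun n : ℕ => ((n : ℝ) + 1) ^ (-ρ)) := by
      have := (Real.summable_nat_rpow (p := -ρ)).mpr (by linarith)
      exact_mod_cast (summable_nat_add_iff 1).mpr this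
    refine h1.congr fun n => ?_
    rw [abs_of_nonneg (by positivity)]; ring_nf
  refine Summable.of_nat_of_neg (hnat.congr fun n => by push_cast; ring_nf) ?_
  refine (hnat.congr fun n => ?_)
  push_cast
  rw [abs_neg]

/-- pointwise convolution weight bound -/
lemma conv_pointwise {β τ : ℝ} (hτ : 0 ≤ τ) (hβτ : τ ≤ β) (x y : ℝ) :
    (1 + |x|) ^ (-β) * (1 + |y|) ^ (-β) ≤
      (1 + |x + y|) ^ (-τ) *
        ((1 / 2) * ((1 + |x|) ^ (-(2 * (β - τ))) + (1 + |y|) ^ (-(2 * (β - τ))))) := by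
  set A := 1 + |x| with hA
  set B := 1 + |y| with hB
  set K := 1 + |x + y| with hK
  have hA1 : (1:ℝ) ≤ A := by simp [hA, abs_nonneg]
  have hB1 : (1:ℝ) ≤ B := by simp [hB, abs_nonneg]
  have hK1 : (1:ℝ) ≤ K := by simp [hK, abs_nonneg]
  have hA0 : (0:ℝ) < A := by linarith
  have hB0 : (0:ℝ) < B := by linarith
  have hK0 : (0:ℝ) < K := by linarith
  have hKAB : K ≤ A * B := by
    have habs : |x + y| ≤ |x| + |y| := abs_add_le x y
    have : (0:ℝ) ≤ |x| * |y| := by positivity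
    nlinarith [abs_nonneg x, abs_nonneg y]
  -- (AB)^(-τ) ≤ K^(-τ)
  have h1 : (A * B) ^ (-τ) ≤ K ^ (-τ) :=
    Real.rpow_le_rpow_of_nonpos hK0 hKAB (by linarith)
  -- split exponents
  have hsplit : A ^ (-β) * B ^ (-β) =
      (A * B) ^ (-τ) * (A ^ (-(β - τ)) * B ^ (-(β - τ))) := by
    rw [Real.mul_rpow hA0.le hB0.le, mul_mul_mul_comm, ← Real.rpow_add hA0,
      ← Real.rpow_add hB0, show -τ + -(β - τ) = -β by ring]
  have hAM : A ^ (-(β - τ)) * B ^ (-(β - τ)) ≤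
      (1 / 2) * (A ^ (-(2 * (β - τ))) + B ^ (-(2 * (β - τ)))) := by
    have ha : A ^ (-(2 * (β - τ))) = (A ^ (-(β - τ)))^2 := by
      rw [← Real.rpow_natCast (A ^ (-(β - τ))) 2, ← Real.rpow_mul hA0.le]
      norm_num; ring_nf
    have hb : B ^ (-(2 * (β - τ))) = (B ^ (-(β - τ)))^2 := by
      rw [← Real.rpow_natCast (B ^ (-(β - τ))) 2, ← Real.rpow_mul hB0.le]
      norm_num; ring_nf
    rw [ha, hb]
    nlinarith [sq_nonneg (A ^ (-(β - τ)) - B ^ (-(β - τ)))]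
  calc A ^ (-β) * B ^ (-β)
      = (A * B) ^ (-τ) * (A ^ (-(β - τ)) * B ^ (-(β - τ))) := hsplit
    _ ≤ K ^ (-τ) * (A ^ (-(β - τ)) * B ^ (-(β - τ))) := by
        apply mul_le_mul_of_nonneg_right h1
        positivity
    _ ≤ K ^ (-τ) * ((1 / 2) * (A ^ (-(2 * (β - τ))) + B ^ (-(2 * (β - τ))))) := by
        apply mul_le_mul_of_nonneg_left hAM
        positivity


/-- The total weight sum. -/
noncomputable def S (ρ : ℝ) : ℝ := ∑' j : ℤ, (1 + |(j : ℝ)|) ^ (-ρ)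

lemma S_nonneg (ρ : ℝ) : 0 ≤ S ρ := tsum_nonneg fun j => by positivity

lemma summable_shift {ρ : ℝ} (hρ : 1 < ρ) (k : ℤ) :
    Summable (fun j : ℤ => (1 + |((k - j : ℤ) : ℝ)|) ^ (-ρ)) := by
  have := (summable_weight hρ).comp_injective (Equiv.subLeft k).injective
  refine this.congr fun j => ?_
  simp [Function.comp, Equiv.subLeft_apply]

lemma tsum_shift {ρ : ℝ} (hρ : 1 < ρ) (k : ℤ) :
    ∑' j : ℤ, (1 + |((k - j : ℤ) : ℝ)|) ^ (-ρ) = S ρ := by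
  have := Equiv.tsum_eq (Equiv.subLeft k) (fun j : ℤ => (1 + |(j : ℝ)|) ^ (-ρ))
  rw [S, ← this]
  rfl

/-- Convolution estimate on the Fourier side. -/
lemma conv_tsum {β τ C : ℝ} (hτ : 0 ≤ τ) (hρ : 1 < 2 * (β - τ)) (hC : 0 ≤ C)
    (c : ℤ → ℂ) (hc : ∀ j : ℤ, ‖c j‖ ≤ C * (1 + |(j : ℝ)|) ^ (-β)) (k : ℤ) :
    Summable (fun j : ℤ => ‖c (k - j) * c j‖) ∧
      ∑' j : ℤ, ‖c (k - j) * c j‖ ≤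
        C ^ 2 * S (2 * (β - τ)) * (1 + |(k : ℝ)|) ^ (-τ) := by
  set ρ := 2 * (β - τ) with hρdef
  have hβτ : τ ≤ β := by nlinarith
  -- the majorant
  set g : ℤ → ℝ := fun j => C ^ 2 * ((1 + |(k : ℝ)|) ^ (-τ) *
      ((1 / 2) * ((1 + |((k - j : ℤ) : ℝ)|) ^ (-ρ) + (1 + |(j : ℝ)|) ^ (-ρ)))) with hg
  have hle : ∀ j : ℤ, ‖c (k - j) * c j‖ ≤ g j := by
    intro j
    have h1 : ‖c (k - j) * c j‖ ≤
        (C * (1 + |((k - j : ℤ) : ℝ)|) ^ (-β)) * (C * (1 + |(j : ℝ)|) ^ (-β)) := by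
      rw [norm_mul]
      exact mul_le_mul (hc _) (hc _) (norm_nonneg _) (by positivity)
    have h2 := conv_pointwise hτ hβτ (((k - j : ℤ) : ℝ)) ((j : ℝ))
    have hxy : (((k - j : ℤ) : ℝ)) + (j : ℝ) = (k : ℝ) := by push_cast; ring
    rw [hxy] at h2
    calc ‖c (k - j) * c j‖ ≤
        (C * (1 + |((k - j : ℤ) : ℝ)|) ^ (-β)) * (C * (1 + |(j : ℝ)|) ^ (-β)) := h1
      _ = C ^ 2 * ((1 + |((k - j : ℤ) : ℝ)|) ^ (-β) * (1 + |(j : ℝ)|) ^ (-β)) := by ring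
      _ ≤ g j := by
          rw [hg]
          exact mul_le_mul_of_nonneg_left h2 (by positivity)
  have hgsum : Summable g := by
    apply Summable.mul_left
    apply Summable.mul_left
    apply Summable.mul_left
    exact (summable_shift hρ k).add (summable_weight hρ)
  have hsummable : Summable (fun j : ℤ => ‖c (k - j) * c j‖) :=
    Summable.of_nonneg_of_le (fun j => norm_nonneg _) hle hgsum
  refine ⟨hsummable, ?_⟩
  have h3 : ∑' j : ℤ, ‖c (k - j) * c j‖ ≤ ∑' j, g j :=
    Summable.tsum_le_tsum hle hsummable hgsum
  have h4 : ∑' j, g j = C ^ 2 * ((1 + |(k : ℝ)|) ^ (-τ) *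
      ((1 / 2) * (S ρ + S ρ))) := by
    rw [hg, tsum_mul_left, tsum_mul_left, tsum_mul_left,
      Summable.tsum_add (summable_shift hρ k) (summable_weight hρ), tsum_shift hρ k]
    rfl
  rw [h4] at h3
  calc ∑' j : ℤ, ‖c (k - j) * c j‖ ≤ _ := h3
    _ = C ^ 2 * S ρ * (1 + |(k : ℝ)|) ^ (-τ) := by ring


section Parseval

open AddCircle

variable {T' : ℝ} [hT' : Fact (0 < T')]

lemma fourierCoeff_congr_ae {f g : AddCircle T' → ℂ}
    (h : f =ᵐ[haarAddCircle] g) (n : ℤ) : fourierCoeff f n = fourierCoeff g n := by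
  unfold fourierCoeff
  exact integral_congr_ae (h.mono fun t ht => by dsimp only; rw [ht])

lemma norm_fourier_apply (n : ℤ) (t : AddCircle T') : ‖fourier n t‖ = 1 := by
  rw [fourier_apply, Circle.norm_coe]

lemma fourierCoeff_mul_fourier (F : AddCircle T' → ℂ) (k j : ℤ) :
    fourierCoeff (fun t => fourier k t * F t) j = fourierCoeff F (j - k) := by
  unfold fourierCoeff
  congr 1
  funext t
  rw [smul_eq_mul, smul_eq_mul, ← mul_assoc, ← fourier_add,
    show -j + k = -(j - k) by ring]

lemma conj_fourierCoeff {F : AddCircle T' → ℂ}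
    (hconj : ∀ t, (starRingEnd ℂ) (F t) = F t) (m : ℤ) :
    (starRingEnd ℂ) (fourierCoeff F m) = fourierCoeff F (-m) := by
  unfold fourierCoeff
  rw [← integral_conj]
  congr 1
  funext t
  rw [smul_eq_mul, smul_eq_mul, map_mul, hconj t, neg_neg]
  congr 1
  · rw [fourier_neg, Complex.conj_conj]

/-- Parseval convolution identity. -/
lemma parseval_conv {F : AddCircle T' → ℂ}
    (hF : MemLp F 2 haarAddCircle) (hconj : ∀ t, (starRingEnd ℂ) (F t) = F t) (k : ℤ) :
    HasSum (fun j : ℤ => fourierCoeff F (k - j) * fourierCoeff F j)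
      (fourierCoeff (fun t => F t * F t) k) := by
  set G : AddCircle T' → ℂ := fun t => fourier k t * F t with hGdef
  have hGm : AEStronglyMeasurable G haarAddCircle :=
    ((map_continuous (fourier k)).aestronglyMeasurable).mul hF.aestronglyMeasurable
  have hG : MemLp G 2 haarAddCircle := by
    refine hF.of_le hGm (Filter.Eventually.of_forall fun t => ?_)
    rw [hGdef]
    simp only [norm_mul, norm_fourier_apply, one_mul]
    exact le_rfl
  set x := hG.toLp G with hx
  set y := hF.toLp F with hy
  have key := (fourierBasis (T := T')).hasSum_inner_mul_inner x y
  -- identify the summands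
  have hcy : ∀ j : ℤ, @inner ℂ _ _ ((fourierBasis (T := T')) j) y = fourierCoeff F j := by
    intro j
    rw [← HilbertBasis.repr_apply_apply, fourierBasis_repr]
    exact fourierCoeff_congr_ae hF.coeFn_toLp j
  have hcx : ∀ j : ℤ, @inner ℂ _ _ x ((fourierBasis (T := T')) j) = fourierCoeff F (k - j) := by
    intro j
    rw [← inner_conj_symm, ← HilbertBasis.repr_apply_apply, fourierBasis_repr]
    have h1 : fourierCoeff (x : AddCircle T' → ℂ) j = fourierCoeff F (j - k) := by
      rw [fourierCoeff_congr_ae hG.coeFn_toLp j, hGdef, fourierCoeff_mul_fourier]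
    rw [h1, conj_fourierCoeff hconj, neg_sub]
  have hxy : @inner ℂ _ _ x y = fourierCoeff (fun t => F t * F t) k := by
    rw [L2.inner_def]
    have h2 : ∀ᵐ t ∂(haarAddCircle : Measure (AddCircle T')),
        @inner ℂ _ _ (x t) (y t) = fourier (-k) t • (F t * F t) := by
      filter_upwards [hG.coeFn_toLp, hF.coeFn_toLp] with t h1 h2
      rw [h1, h2, RCLike.inner_apply, hGdef]
      simp only [smul_eq_mul, map_mul]
      rw [hconj t, ← fourier_neg]
      ring
    rw [integral_congr_ae h2]
    rfl
  simp_rw [hcy, hcx] at key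
  rwa [hxy] at key

end Parseval


section Bridge

variable {T : ℝ}

open AddCircle

lemma fourier_eq_exp (hT : 0 < T) (k : ℤ) (x : ℝ) :
    (fourier (-k) (x : AddCircle (2*T)) : ℂ) =
      Complex.exp (-(Complex.I * Real.pi * k * x / T)) := by
  rw [fourier_coe_apply]
  congr 1
  push_cast
  field_simp

lemma norm_exp_eq_one (hT : 0 < T) (k : ℤ) (x : ℝ) :
    ‖Complex.exp (-(Complex.I * Real.pi * k * x / T))‖ = 1 := by
  have h : -(Complex.I * Real.pi * k * x / T) = ((-(Real.pi * k * x / T) : ℝ) : ℂ) * Complex.I := by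
    push_cast
    ring
  rw [h, Complex.norm_exp_ofReal_mul_I]

lemma fourierCoeff_eq_intervalIntegral' (hT : 0 < T) [Fact (0 < 2*T)]
    (H : AddCircle (2*T) → ℂ) (f : ℝ → ℂ)
    (hae : ∀ᵐ x : ℝ ∂(volume.restrict (Set.Ioc (-T) T)), H ((x : ℝ) : AddCircle (2*T)) = f x) (k : ℤ) :
    fourierCoeff H k =
      (1/(2*T) : ℝ) • ∫ x in (-T)..T,
        f x * Complex.exp (-(Complex.I * Real.pi * k * x / T)) := by
  rw [fourierCoeff_eq_intervalIntegral H k (-T), show -T + 2*T = T by ring]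
  congr 1
  apply intervalIntegral.integral_congr_ae
  have hae' := (ae_restrict_iff' measurableSet_Ioc).mp hae
  rw [Set.uIoc_of_le (by linarith : -T ≤ T)]
  filter_upwards [hae'] with x hx hmem
  rw [hx hmem, smul_eq_mul, fourier_eq_exp hT]
  ring

lemma memLp_lift (hT : 0 < T) [Fact (0 < 2*T)] (g₀ : ℝ → ℝ)
    (hg₀ : Measurable g₀)
    (hInt : IntegrableOn (fun x => (g₀ x)^2) (Set.Ioc (-T) T) volume) :
    MemLp (AddCircle.liftIoc (2*T) (-T) (fun x => (g₀ x : ℂ))) 2 haarAddCircle := by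
  set F := AddCircle.liftIoc (2*T) (-T) (fun x => (g₀ x : ℂ)) with hF
  have hFeq : F = fun z => ((g₀ ((AddCircle.equivIoc (2*T) (-T) z : ℝ)) : ℝ) : ℂ) := rfl
  have hFm : Measurable F := by
    rw [hFeq]
    exact Complex.measurable_ofReal.comp (hg₀.comp (measurable_subtype_coe.comp
      (AddCircle.measurableEquivIoc (2*T) (-T)).measurable))
  refine (memLp_two_iff_integrable_sq_norm hFm.aestronglyMeasurable).mpr ?_
  have hIoc : Set.Ioc (-T) (-T + 2*T) = Set.Ioc (-T) T := by rw [show -T + 2*T = T by ring]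
  -- integrability over the circle volume
  have hcomp : Integrable ((fun z => ‖F z‖^2) ∘ (QuotientAddGroup.mk : ℝ → AddCircle (2*T)))
      (volume.restrict (Set.Ioc (-T) (-T + 2*T))) := by
    rw [hIoc]
    refine hInt.congr ?_
    refine (ae_restrict_iff' measurableSet_Ioc).mpr (Filter.Eventually.of_forall fun x hx => ?_)
    have hx' : x ∈ Set.Ioc (-T) (-T + 2*T) := by rwa [hIoc]
    simp only [Function.comp]
    rw [hF, AddCircle.liftIoc_coe_apply hx']
    rw [Complex.norm_real, Real.norm_eq_abs, sq_abs]
  have hvol : Integrable (fun z => ‖F z‖^2) (volume : Measure (AddCircle (2*T))) := by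
    refine ((AddCircle.measurePreserving_mk (2*T) (-T)).integrable_comp ?_).mp hcomp
    exact ((hFm.norm.pow_const 2).aestronglyMeasurable)
  have hvol' := AddCircle.volume_eq_smul_haarAddCircle (T := 2*T)
  rw [hvol'] at hvol
  exact (integrable_smul_measure (by simp only [ne_eq, ENNReal.ofReal_eq_zero, not_le]; linarith) ENNReal.ofReal_ne_top).mp hvol

end Bridge

end APS

set_option maxHeartbeats 2000000 in
/-- A posteriori smoothness.  Let `α > 1/2` and let
`φ ∈ L²[-T,T]` be a distributional solution of `Λ^α φ + ωφ - φ² + a = 0`,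
expressed mode by mode on the Fourier side (which is equivalent to testing
against all `H^∞` functions):
`((π|k|/T)^α + ω)·φ̂(k) - (φ²)^(k) + a√(2T)·δ_{k0} = 0` for all `k ∈ ℤ`.
Then `φ` belongs to `H^k[-T,T]` for every `k ∈ ℕ`, i.e. all the weighted
Fourier series `∑ (1+|k|²)^m |φ̂(k)|²` converge. -/
theorem a_posteriori_smoothness
    (α ω a T : ℝ) (hα : 1 / 2 < α) (hT : 0 < T)
    (φ : ℝ → ℝ)
    (hper : Function.Periodic φ (2 * T))
    (hL2 : IntervalIntegrable (fun x => (φ x) ^ 2) volume (-T) T)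
    (hsum : Summable fun k : ℤ => ‖fourierCoeffT T (fun x => (φ x : ℂ)) k‖ ^ 2)
    (heq : ∀ k : ℤ,
      (((Real.pi * |(k : ℝ)| / T) ^ α + ω : ℝ) : ℂ) *
          fourierCoeffT T (fun x => (φ x : ℂ)) k
        - fourierCoeffT T (fun x => ((φ x : ℂ)) ^ 2) k
        + (a : ℂ) * (Real.sqrt (2 * T) : ℂ) * (if k = 0 then 1 else 0) = 0) :
    ∀ m : ℕ, Summable fun k : ℤ =>
      (1 + (k : ℝ) ^ 2) ^ (m : ℝ) * ‖fourierCoeffT T (fun x => (φ x : ℂ)) k‖ ^ 2 := by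
  intro m
  by_cases hgood : IntervalIntegrable (fun x => (φ x : ℂ)) volume (-T) T
  case neg =>
    -- every Fourier coefficient vanishes
    have hzero : ∀ k : ℤ, fourierCoeffT T (fun x => (φ x : ℂ)) k = 0 := by
      intro k
      have hni : ¬ IntervalIntegrable
          (fun x => (φ x : ℂ) * Complex.exp (-(Complex.I * Real.pi * k * x / T)))
          volume (-T) T := by
        intro h
        apply hgood
        have hcont : ContinuousOn (fun x : ℝ =>
            Complex.exp (Complex.I * Real.pi * k * x / T)) (Set.uIcc (-T) T) := by
          apply Continuous.continuousOn
          fun_prop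
        have h2 := h.mul_continuousOn hcont
        have h3 : (fun x => ((φ x : ℂ) * Complex.exp (-(Complex.I * Real.pi * k * x / T))) *
            Complex.exp (Complex.I * Real.pi * k * x / T)) = fun x => (φ x : ℂ) := by
          funext x
          rw [mul_assoc, ← Complex.exp_add, neg_add_cancel, Complex.exp_zero, mul_one]
        rwa [h3] at h2
      rw [fourierCoeffT, intervalIntegral.integral_undef hni, mul_zero]
    refine Summable.congr (summable_zero) fun k => ?_
    rw [hzero k]
    simp
  case pos =>
    haveI : Fact (0 < 2 * T) := ⟨by linarith⟩
    have h2T : (0:ℝ) < 2 * T := by linarith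
    have hsqrt_pos : 0 < Real.sqrt (2 * T) := Real.sqrt_pos.mpr h2T
    have hss : Real.sqrt (2 * T) * Real.sqrt (2 * T) = 2 * T := Real.mul_self_sqrt h2T.le
    set c : ℤ → ℂ := fun k => fourierCoeffT T (fun x => (φ x : ℂ)) k with hcdef
    set d : ℤ → ℂ := fun k => fourierCoeffT T (fun x => ((φ x : ℂ)) ^ 2) k with hddef
    -- measurable representative of φ on the interval
    have hφaesm : AEStronglyMeasurable φ (volume.restrict (Set.Ioc (-T) T)) := by
      have h1 : IntegrableOn (fun x => (φ x : ℂ)) (Set.Ioc (-T) T) volume :=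
        (intervalIntegrable_iff_integrableOn_Ioc_of_le (by linarith)).mp hgood
      have h2 := h1.aestronglyMeasurable
      exact (Complex.isometry_ofReal.isEmbedding.aestronglyMeasurable_comp_iff).mp h2
    set g₀ : ℝ → ℝ := hφaesm.mk φ with hg₀def
    have hg₀m : StronglyMeasurable g₀ := hφaesm.stronglyMeasurable_mk
    have hg₀ae : φ =ᵐ[volume.restrict (Set.Ioc (-T) T)] g₀ := hφaesm.ae_eq_mk
    set F : AddCircle (2*T) → ℂ := AddCircle.liftIoc (2*T) (-T) (fun x => (g₀ x : ℂ)) with hFdef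
    have hIntSq : IntegrableOn (fun x => (g₀ x)^2) (Set.Ioc (-T) T) volume := by
      have h1 : IntegrableOn (fun x => (φ x)^2) (Set.Ioc (-T) T) volume :=
        (intervalIntegrable_iff_integrableOn_Ioc_of_le (by linarith)).mp hL2
      exact h1.congr (hg₀ae.mono fun x hx => by dsimp only; rw [hx])
    have hF2 : MeasureTheory.MemLp F 2 AddCircle.haarAddCircle :=
      APS.memLp_lift hT g₀ hg₀m.measurable hIntSq
    have hconjF : ∀ t, (starRingEnd ℂ) (F t) = F t := by
      intro t
      have h1 : F t = ((g₀ ((AddCircle.equivIoc (2*T) (-T) t : ℝ)) : ℝ) : ℂ) := rfl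
      rw [h1, Complex.conj_ofReal]
    have hae_F : ∀ᵐ x : ℝ ∂(volume.restrict (Set.Ioc (-T) T)),
        F ((x : ℝ) : AddCircle (2*T)) = (φ x : ℂ) := by
      filter_upwards [hg₀ae, ae_restrict_mem measurableSet_Ioc] with x hx hmem
      have hmem' : x ∈ Set.Ioc (-T) (-T + 2*T) := by
        rwa [show -T + 2*T = T by ring]
      rw [hFdef, AddCircle.liftIoc_coe_apply hmem', hx]
    have hae_F2 : ∀ᵐ x : ℝ ∂(volume.restrict (Set.Ioc (-T) T)),
        F ((x : ℝ) : AddCircle (2*T)) * F ((x : ℝ) : AddCircle (2*T)) = ((φ x : ℂ)) ^ 2 := by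
      filter_upwards [hae_F] with x hx
      rw [hx]
      ring
    -- coefficient identities
    have hratio : (1 / Real.sqrt (2*T) : ℂ) =
        (Real.sqrt (2*T) : ℂ) * (((1/(2*T) : ℝ)) : ℂ) := by
      have hr : (1 / Real.sqrt (2*T) : ℝ) = Real.sqrt (2*T) * (1/(2*T)) := by
        rw [mul_one_div, eq_comm, div_eq_div_iff h2T.ne' hsqrt_pos.ne', hss, one_mul]
      exact_mod_cast congrArg (fun r : ℝ => (r : ℂ)) hr
    have hcoeff : ∀ k : ℤ, c k = (Real.sqrt (2*T) : ℂ) * fourierCoeff F k := by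
      intro k
      rw [APS.fourierCoeff_eq_intervalIntegral' hT F (fun x => (φ x : ℂ)) hae_F k]
      rw [hcdef]
      show (1 / (Real.sqrt (2 * T) : ℂ)) * _ = _
      rw [hratio, Complex.real_smul, mul_assoc]
    have hdcoeff : ∀ k : ℤ, d k =
        (Real.sqrt (2*T) : ℂ) * fourierCoeff (fun t => F t * F t) k := by
      intro k
      rw [APS.fourierCoeff_eq_intervalIntegral' hT (fun t => F t * F t)
        (fun x => ((φ x : ℂ))^2) hae_F2 k]
      rw [hddef]
      show (1 / (Real.sqrt (2 * T) : ℂ)) * _ = _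
      rw [hratio, Complex.real_smul, mul_assoc]
    -- convolution identity
    have hconv : ∀ k : ℤ, HasSum (fun j : ℤ => c (k - j) * c j)
        ((Real.sqrt (2*T) : ℂ) * d k) := by
      intro k
      have h := (APS.parseval_conv hF2 hconjF k).mul_left ((2*T : ℝ) : ℂ)
      have h1 : (fun j : ℤ => ((2*T : ℝ) : ℂ) * (fourierCoeff F (k - j) * fourierCoeff F j))
          = fun j : ℤ => c (k - j) * c j := by
        funext j
        rw [hcoeff (k - j), hcoeff j]
        have : ((2*T : ℝ) : ℂ) = (Real.sqrt (2*T) : ℂ) * (Real.sqrt (2*T) : ℂ) := by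
          exact_mod_cast congrArg (fun r : ℝ => (r : ℂ)) hss.symm
        rw [this]
        ring
      have h2 : ((2*T : ℝ) : ℂ) * fourierCoeff (fun t => F t * F t) k
          = (Real.sqrt (2*T) : ℂ) * d k := by
        rw [hdcoeff k]
        have : ((2*T : ℝ) : ℂ) = (Real.sqrt (2*T) : ℂ) * (Real.sqrt (2*T) : ℂ) := by
          exact_mod_cast congrArg (fun r : ℝ => (r : ℂ)) hss.symm
        rw [this]
        ring
      rwa [h1, h2] at h
    -- the mode-by-mode equation, away from the zero mode
    have heq' : ∀ k : ℤ, k ≠ 0 →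
        (((Real.pi * |(k : ℝ)| / T) ^ α + ω : ℝ) : ℂ) * c k = d k := by
      intro k hk
      have h := heq k
      rw [if_neg hk, mul_zero, add_zero, sub_eq_zero] at h
      exact h
    -- uniform bound on the coefficients of φ
    have hsum' : Summable (fun k : ℤ => ‖c k‖^2) := hsum
    set B : ℝ := Real.sqrt (∑' k : ℤ, ‖c k‖^2) with hBdef
    have hB : ∀ k : ℤ, ‖c k‖ ≤ B := by
      intro k
      have h1 : ‖c k‖^2 ≤ ∑' j : ℤ, ‖c j‖^2 := hsum'.le_tsum k (fun j _ => sq_nonneg _)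
      have h2 := Real.sqrt_le_sqrt h1
      rwa [Real.sqrt_sq (norm_nonneg _)] at h2
    -- uniform bound on the coefficients of φ²
    set M₀ : ℝ := (1 / Real.sqrt (2*T)) * ∫ x in (-T)..T, (φ x)^2 with hM₀def
    have hM₀nn : 0 ≤ M₀ := by
      rw [hM₀def]
      have := intervalIntegral.integral_nonneg (μ := volume)
        (f := fun x => (φ x)^2) (by linarith : -T ≤ T) (fun x _ => sq_nonneg _)
      positivity
    have hM0 : ∀ k : ℤ, ‖d k‖ ≤ M₀ := by
      intro k
      rw [hddef]
      show ‖(1 / (Real.sqrt (2 * T) : ℂ)) * _‖ ≤ _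
      rw [norm_mul, norm_div, norm_one, Complex.norm_real, Real.norm_eq_abs,
        abs_of_nonneg (Real.sqrt_nonneg _), hM₀def]
      apply mul_le_mul_of_nonneg_left _ (by positivity)
      have h1 := intervalIntegral.norm_integral_le_integral_norm (μ := volume)
        (f := fun x => ((φ x : ℂ))^2 * Complex.exp (-(Complex.I * Real.pi * k * x / T)))
        (by linarith : -T ≤ T)
      have h2 : (∫ x in (-T)..T,
          ‖((φ x : ℂ))^2 * Complex.exp (-(Complex.I * Real.pi * k * x / T))‖)
          = ∫ x in (-T)..T, (φ x)^2 := by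
        apply intervalIntegral.integral_congr
        intro x _
        dsimp only
        rw [norm_mul, APS.norm_exp_eq_one hT, mul_one, norm_pow, Complex.norm_real, Real.norm_eq_abs, sq_abs]
      rw [h2] at h1
      exact h1
    -- solving the equation: dividing by the symbol gains α powers of decay
    have hsolve : ∀ M τ : ℝ, 0 ≤ M → 0 ≤ τ →
        (∀ k : ℤ, ‖d k‖ ≤ M * (1 + |(k:ℝ)|) ^ (-τ)) →
        ∃ C : ℝ, 0 ≤ C ∧ ∀ k : ℤ, ‖c k‖ ≤ C * (1 + |(k:ℝ)|) ^ (-(τ + α)) := by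
      intro M τ hM hτ hd
      set c₀ : ℝ := (Real.pi / (2*T)) ^ α with hc₀def
      have hc₀ : 0 < c₀ := Real.rpow_pos_of_pos (by positivity) α
      have hαpos : (0:ℝ) < α := by linarith
      obtain ⟨K, hK⟩ := exists_nat_ge (max 1 ((2*(|ω|+1)/c₀) ^ α⁻¹))
      have hK1 : (1:ℝ) ≤ K := le_trans (le_max_left _ _) hK
      have hKR : (2*(|ω|+1)/c₀) ^ α⁻¹ ≤ (K:ℝ) := le_trans (le_max_right _ _) hK
      have key : ∀ k : ℤ, (K:ℝ) ≤ |(k:ℝ)| →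
          ‖c k‖ ≤ (2*M/c₀) * (1 + |(k:ℝ)|) ^ (-(τ+α)) := by
        intro k hk
        have hk1 : (1:ℝ) ≤ |(k:ℝ)| := le_trans hK1 hk
        have hk0 : k ≠ 0 := by
          intro h
          rw [h] at hk1
          simp at hk1
          linarith
        set P : ℝ := (1 + |(k:ℝ)|) ^ α with hPdef
        have hbase : (0:ℝ) < 1 + |(k:ℝ)| := by positivity
        have hP : 0 < P := Real.rpow_pos_of_pos hbase α
        have h1 : Real.pi / (2*T) * (1 + |(k:ℝ)|) ≤ Real.pi * |(k:ℝ)| / T := by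
          rw [div_mul_eq_mul_div, div_le_div_iff₀ (by linarith) hT]
          nlinarith [mul_nonneg (mul_nonneg Real.pi_pos.le hT.le) (sub_nonneg.mpr hk1)]
        have h2 : c₀ * P ≤ (Real.pi * |(k:ℝ)| / T) ^ α := by
          rw [hc₀def, hPdef, ← Real.mul_rpow (by positivity) (by positivity)]
          exact Real.rpow_le_rpow (by positivity) h1 hαpos.le
        have h3 : 2*(|ω|+1) ≤ c₀ * P := by
          have h4 : (2*(|ω|+1)/c₀) = ((2*(|ω|+1)/c₀) ^ α⁻¹) ^ α :=
            (Real.rpow_inv_rpow (by positivity) hαpos.ne').symm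
          have h5 : (2*(|ω|+1)/c₀) ≤ P := by
            rw [h4, hPdef]
            apply Real.rpow_le_rpow (by positivity) _ hαpos.le
            linarith
          calc 2*(|ω|+1) = c₀ * (2*(|ω|+1)/c₀) := by field_simp
            _ ≤ c₀ * P := by nlinarith
        set DK : ℝ := (Real.pi * |(k:ℝ)| / T) ^ α + ω with hDKdef
        have hω := neg_abs_le ω
        have hDlb : c₀ * P / 2 ≤ DK := by
          rw [hDKdef]
          nlinarith
        have hdc : DK * ‖c k‖ = ‖d k‖ := by
          rw [← heq' k hk0, ← hDKdef, norm_mul]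
          simp only [Complex.norm_real, Real.norm_eq_abs]
          rw [abs_of_nonneg (le_trans (by positivity : (0:ℝ) ≤ c₀ * P / 2) hDlb)]
        have step : ‖c k‖ ≤ (M * (1 + |(k:ℝ)|) ^ (-τ)) / (c₀ * P / 2) := by
          rw [le_div_iff₀ (by positivity)]
          calc ‖c k‖ * (c₀ * P / 2) ≤ ‖c k‖ * DK :=
                mul_le_mul_of_nonneg_left hDlb (norm_nonneg _)
            _ = ‖d k‖ := by rw [mul_comm]; exact hdc
            _ ≤ M * (1 + |(k:ℝ)|) ^ (-τ) := hd k
        have hsplit : (1 + |(k:ℝ)|) ^ (-(τ+α)) = (1 + |(k:ℝ)|) ^ (-τ) * P⁻¹ := by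
          rw [hPdef, ← Real.rpow_neg hbase.le, ← Real.rpow_add hbase]
          ring_nf
        calc ‖c k‖ ≤ (M * (1 + |(k:ℝ)|) ^ (-τ)) / (c₀ * P / 2) := step
          _ = (2*M/c₀) * ((1 + |(k:ℝ)|) ^ (-τ) * P⁻¹) := by
              field_simp
          _ = (2*M/c₀) * (1 + |(k:ℝ)|) ^ (-(τ+α)) := by rw [hsplit]
      refine ⟨max (2*M/c₀) (B * (1 + (K:ℝ)) ^ (τ+α)),
        le_trans (by positivity) (le_max_left _ _), fun k => ?_⟩
      rcases le_or_gt (K:ℝ) |(k:ℝ)| with h | h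
      · exact le_trans (key k h)
          (mul_le_mul_of_nonneg_right (le_max_left _ _) (by positivity))
      · have hbase : (0:ℝ) < 1 + |(k:ℝ)| := by positivity
        have h6 : (1 + (K:ℝ)) ^ (-(τ+α)) ≤ (1 + |(k:ℝ)|) ^ (-(τ+α)) :=
          Real.rpow_le_rpow_of_nonpos hbase (by linarith) (by linarith)
        have h8 : (B * (1 + (K:ℝ)) ^ (τ+α)) * (1 + (K:ℝ)) ^ (-(τ+α)) = B := by
          rw [mul_assoc, ← Real.rpow_add (by positivity),
            show τ + α + -(τ + α) = (0:ℝ) by ring, Real.rpow_zero, mul_one]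
        have h7 : ‖c k‖ ≤ (B * (1 + (K:ℝ)) ^ (τ+α)) * (1 + |(k:ℝ)|) ^ (-(τ+α)) := by
          calc ‖c k‖ ≤ B := hB k
            _ = (B * (1 + (K:ℝ)) ^ (τ+α)) * (1 + (K:ℝ)) ^ (-(τ+α)) := h8.symm
            _ ≤ _ := mul_le_mul_of_nonneg_left h6 (by positivity)
        exact le_trans h7
          (mul_le_mul_of_nonneg_right (le_max_right _ _) (by positivity))
    -- the product estimate
    have hS0 : 0 ≤ APS.S (α + 1/2) := APS.S_nonneg _
    have hprod : ∀ C β : ℝ, 0 ≤ C → α ≤ β →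
        (∀ k : ℤ, ‖c k‖ ≤ C * (1 + |(k:ℝ)|) ^ (-β)) →
        (∀ k : ℤ, ‖d k‖ ≤ (C^2 * APS.S (α + 1/2) / Real.sqrt (2*T)) *
          (1 + |(k:ℝ)|) ^ (-(β - (1/4 + α/2)))) := by
      intro C β hC hβ hc' k
      set τ : ℝ := β - (1/4 + α/2) with hτdef
      have hτ0 : 0 ≤ τ := by rw [hτdef]; linarith
      have hconvt := APS.conv_tsum (β := β) (τ := τ) hτ0
        (by rw [hτdef]; ring_nf; linarith) hC c hc' k
      have hSrw : 2*(β - τ) = α + 1/2 := by rw [hτdef]; ring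
      rw [hSrw] at hconvt
      obtain ⟨hsummable, htsum⟩ := hconvt
      have h1 : Real.sqrt (2*T) * ‖d k‖ ≤
          C^2 * APS.S (α+1/2) * (1 + |(k:ℝ)|) ^ (-τ) := by
        have h2 : ‖(Real.sqrt (2*T) : ℂ) * d k‖ = Real.sqrt (2*T) * ‖d k‖ := by
          rw [norm_mul, Complex.norm_real, Real.norm_eq_abs,
            abs_of_nonneg (Real.sqrt_nonneg _)]
        rw [← h2, ← (hconv k).tsum_eq]
        exact le_trans (norm_tsum_le_tsum_norm hsummable) htsum
      rw [div_mul_eq_mul_div, le_div_iff₀ hsqrt_pos]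
      nlinarith [h1]
    -- the bootstrap
    have hεp : (0:ℝ) < α/2 - 1/4 := by linarith
    have main : ∀ n : ℕ, ∃ C : ℝ, 0 ≤ C ∧ ∀ k : ℤ,
        ‖c k‖ ≤ C * (1 + |(k:ℝ)|) ^ (-(α + n * (α/2 - 1/4))) := by
      intro n
      induction n with
      | zero =>
        have hd0 : ∀ k : ℤ, ‖d k‖ ≤ M₀ * (1 + |(k:ℝ)|) ^ (-(0:ℝ)) := by
          intro k
          rw [neg_zero, Real.rpow_zero, mul_one]
          exact hM0 k
        obtain ⟨C, hC0, hCb⟩ := hsolve M₀ 0 hM₀nn le_rfl hd0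
        refine ⟨C, hC0, fun k => ?_⟩
        have hrw : -(α + (0:ℕ) * (α/2 - 1/4)) = -((0:ℝ) + α) := by push_cast; ring
        rw [hrw]
        exact hCb k
      | succ n ih =>
        obtain ⟨C, hC0, hCb⟩ := ih
        have hn0 : (0:ℝ) ≤ (n:ℝ) * (α/2 - 1/4) :=
          mul_nonneg (Nat.cast_nonneg n) (by linarith)
        have hβ : α ≤ α + n * (α/2 - 1/4) := by linarith
        have hd1 := hprod C (α + n * (α/2 - 1/4)) hC0 hβ hCb
        obtain ⟨C', hC'0, hC'b⟩ := hsolve (C^2 * APS.S (α+1/2) / Real.sqrt (2*T))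
          ((α + n * (α/2 - 1/4)) - (1/4 + α/2))
          (div_nonneg (mul_nonneg (sq_nonneg C) hS0) (Real.sqrt_nonneg _))
          (by linarith) hd1
        refine ⟨C', hC'0, fun k => ?_⟩
        have hrw : -(α + ((n+1 : ℕ)) * (α/2 - 1/4)) =
            -(((α + n * (α/2 - 1/4)) - (1/4 + α/2)) + α) := by push_cast; ring
        rw [hrw]
        exact hC'b k
    -- conclusion
    obtain ⟨n, hn⟩ := exists_nat_ge ((m + 1 - α)/(α/2 - 1/4))
    have hexp : (m:ℝ) + 1 ≤ α + n * (α/2 - 1/4) := by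
      rw [div_le_iff₀ hεp] at hn
      linarith
    obtain ⟨C, hC0, hCb⟩ := main n
    apply Summable.of_nonneg_of_le (f := fun k : ℤ => C^2 * (1 + |(k:ℝ)|) ^ (-(2:ℝ)))
      (fun k => by positivity)
    · intro k
      show (1 + (k:ℝ)^2) ^ (m:ℝ) * ‖c k‖^2 ≤ C^2 * (1 + |(k:ℝ)|) ^ (-(2:ℝ))
      have hbase : (1:ℝ) ≤ 1 + |(k:ℝ)| := le_add_of_nonneg_right (abs_nonneg _)
      have hbase0 : (0:ℝ) < 1 + |(k:ℝ)| := by positivity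
      have h1 : ‖c k‖^2 ≤ C^2 * (1 + |(k:ℝ)|) ^ (-(2*(α + n * (α/2 - 1/4)))) := by
        have h3 : ‖c k‖^2 ≤ (C * (1 + |(k:ℝ)|) ^ (-(α + n * (α/2 - 1/4))))^2 :=
          pow_le_pow_left₀ (norm_nonneg _) (hCb k) 2
        calc ‖c k‖^2 ≤ _ := h3
          _ = C^2 * (1 + |(k:ℝ)|) ^ (-(2*(α + n*(α/2-1/4)))) := by
            rw [mul_pow]
            congr 1
            rw [← Real.rpow_natCast ((1 + |(k:ℝ)|) ^ (-(α + n*(α/2-1/4)))) 2,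
              ← Real.rpow_mul hbase0.le]
            congr 1
            push_cast
            ring
      have h5 : 1 + (k:ℝ)^2 ≤ (1 + |(k:ℝ)|)^(2:ℕ) := by
        nlinarith [sq_abs (k:ℝ), abs_nonneg (k:ℝ)]
      have h4 : (1 + (k:ℝ)^2) ^ (m:ℝ) ≤ (1 + |(k:ℝ)|) ^ (2*(m:ℝ)) := by
        have h6 : ((1 + |(k:ℝ)|)^(2:ℕ) : ℝ) = (1 + |(k:ℝ)|) ^ ((2:ℕ):ℝ) :=
          (Real.rpow_natCast _ 2).symm
        calc (1 + (k:ℝ)^2) ^ (m:ℝ) ≤ ((1 + |(k:ℝ)|)^(2:ℕ)) ^ (m:ℝ) :=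
              Real.rpow_le_rpow (by positivity) h5 (Nat.cast_nonneg m)
          _ = (1 + |(k:ℝ)|) ^ (2*(m:ℝ)) := by
            rw [h6, ← Real.rpow_mul hbase0.le]
            norm_num
      calc (1 + (k:ℝ)^2) ^ (m:ℝ) * ‖c k‖^2 ≤
            (1 + |(k:ℝ)|) ^ (2*(m:ℝ)) * (C^2 * (1 + |(k:ℝ)|) ^ (-(2*(α + n * (α/2 - 1/4))))) :=
            mul_le_mul h4 h1 (by positivity) (by positivity)
        _ = C^2 * (1 + |(k:ℝ)|) ^ (2*(m:ℝ) + -(2*(α + n * (α/2 - 1/4)))) := by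
            rw [Real.rpow_add hbase0]
            ring
        _ ≤ C^2 * (1 + |(k:ℝ)|) ^ (-(2:ℝ)) := by
            apply mul_le_mul_of_nonneg_left _ (sq_nonneg C)
            apply Real.rpow_le_rpow_of_exponent_le hbase
            linarith
    · exact (APS.summable_weight (by norm_num : (1:ℝ) < 2)).mul_left (C^2)
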